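/- arXiv:math/0503483 — 3 statements merged into one kernel-verified Lean document; each statement's English description precedes it below -/
import Mathlib

section
/- Let (Ω, F, P) be a probability space, F a sub-σ-field of the ambient σ-field, and Z₁, Z₂, V real random variables such that Z₁ ≤ V ≤ Z₂ almost surely, E[V | F] = 0 almost surely, and Z₁, Z₂ are F-measurable. Then for all λ ∈ ℝ, E[exp(λV) | F] ≤ exp(λ²(Z₂ − Z₁)²/8) almost surely. -/
open MeasureTheory Real

private lemma denom_pos {p : ℝ} (hp0 : 0 ≤ p) (hp1 : p ≤ 1) (x : ℝ) :
    0 < (1 - p) + p * Real.exp x := by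
  rcases eq_or_lt_of_le hp0 with h | h
  · simp [← h]
  · have := Real.exp_pos x
    nlinarith

/-- The Hoeffding core inequality for `h ≥ 0`. -/
private lemma core_nonneg {p : ℝ} (hp0 : 0 ≤ p) (hp1 : p ≤ 1) {h : ℝ} (hh : 0 ≤ h) :
    Real.log ((1 - p) + p * Real.exp h) - p * h ≤ h ^ 2 / 8 := by
  set φ : ℝ → ℝ := fun x => p * Real.exp x / ((1 - p) + p * Real.exp x) with hφdef
  have hd : ∀ x, HasDerivAt (fun x => (1 - p) + p * Real.exp x) (p * Real.exp x) x := by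
    intro x
    simpa using ((Real.hasDerivAt_exp x).const_mul p).const_add (1 - p)
  have hpos := fun x => denom_pos hp0 hp1 x
  have hφ : ∀ x, HasDerivAt φ (φ x * (1 - φ x)) x := by
    intro x
    have h1 : HasDerivAt (fun x => p * Real.exp x) (p * Real.exp x) x :=
      (Real.hasDerivAt_exp x).const_mul p
    have := h1.div (hd x) (ne_of_gt (hpos x))
    refine this.congr_deriv ?_
    have hne := ne_of_gt (hpos x)
    simp only [hφdef]
    field_simp
  have hφ01 : ∀ x, 0 ≤ φ x ∧ φ x ≤ 1 := by
    intro x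
    constructor
    · exact div_nonneg (by positivity) (le_of_lt (hpos x))
    · rw [div_le_one (hpos x)]; nlinarith [Real.exp_pos x]
  -- G = derivative of (x^2/8 - L x)
  set G : ℝ → ℝ := fun x => x / 4 - (φ x - p) with hGdef
  have hG : ∀ x, HasDerivAt G (1 / 4 - φ x * (1 - φ x)) x := by
    intro x
    exact ((hasDerivAt_id x).div_const 4).sub ((hφ x).sub_const p)
  have hGmono : Monotone G := by
    apply monotone_of_deriv_nonneg (fun x => (hG x).differentiableAt)
    intro x
    rw [(hG x).deriv]
    nlinarith [sq_nonneg (1 - 2 * φ x), (hφ01 x).1, (hφ01 x).2]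
  have hG0 : G 0 = 0 := by
    simp [hGdef, hφdef]
  set g : ℝ → ℝ := fun x => x ^ 2 / 8 - (Real.log ((1 - p) + p * Real.exp x) - p * x)
    with hgdef
  have hg : ∀ x, HasDerivAt g (G x) x := by
    intro x
    have hlog : HasDerivAt (fun x => Real.log ((1 - p) + p * Real.exp x))
        (p * Real.exp x / ((1 - p) + p * Real.exp x)) x := (hd x).log (ne_of_gt (hpos x))
    have h2 : HasDerivAt (fun x : ℝ => x ^ 2 / 8) (x / 4) x := by
      have := ((hasDerivAt_pow 2 x).div_const 8)
      refine this.congr_deriv ?_; norm_num; ring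
    have h3 : HasDerivAt (fun x : ℝ => p * x) p x := by
      simpa using (hasDerivAt_id x).const_mul p
    exact h2.sub (hlog.sub h3)
  have hmono : MonotoneOn g (Set.Ici 0) := by
    apply monotoneOn_of_deriv_nonneg (convex_Ici 0)
      (fun x _ => (hg x).differentiableAt.continuousAt.continuousWithinAt)
      (fun x _ => (hg x).differentiableAt.differentiableWithinAt)
    intro x hx
    rw [(hg x).deriv]
    rw [interior_Ici] at hx
    calc (0:ℝ) = G 0 := hG0.symm
    _ ≤ G x := hGmono (le_of_lt hx)
  have h0 : g 0 = 0 := by simp [hgdef]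
  have := hmono (Set.self_mem_Ici) (Set.mem_Ici.2 hh) hh
  rw [h0] at this
  simp only [hgdef] at this
  linarith

/-- The Hoeffding core inequality. -/
private lemma core {p : ℝ} (hp0 : 0 ≤ p) (hp1 : p ≤ 1) (h : ℝ) :
    (1 - p) * Real.exp (-p * h) + p * Real.exp ((1 - p) * h) ≤ Real.exp (h ^ 2 / 8) := by
  have key : ∀ q : ℝ, 0 ≤ q → q ≤ 1 → ∀ t : ℝ, 0 ≤ t →
      (1 - q) * Real.exp (-q * t) + q * Real.exp ((1 - q) * t) ≤ Real.exp (t ^ 2 / 8) := by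
    intro q hq0 hq1 t ht
    have hlog := core_nonneg hq0 hq1 ht
    have hpos := denom_pos hq0 hq1 t
    have : (1 - q) + q * Real.exp t ≤ Real.exp (t ^ 2 / 8 + q * t) := by
      rw [← Real.log_le_iff_le_exp hpos]; linarith
    have hstep := mul_le_mul_of_nonneg_left this (le_of_lt (Real.exp_pos (-q * t)))
    calc (1 - q) * Real.exp (-q * t) + q * Real.exp ((1 - q) * t)
        = Real.exp (-q * t) * ((1 - q) + q * Real.exp t) := by
          rw [mul_add, ← mul_assoc, mul_comm (Real.exp (-q*t)) q, mul_assoc, ← Real.exp_add]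
          ring_nf
    _ ≤ Real.exp (-q * t) * Real.exp (t ^ 2 / 8 + q * t) := hstep
    _ = Real.exp (t ^ 2 / 8) := by rw [← Real.exp_add]; ring_nf
  rcases le_or_gt 0 h with hh | hh
  · exact key p hp0 hp1 h hh
  · have := key (1 - p) (by linarith) (by linarith) (-h) (by linarith)
    have heq : (1 - (1 - p)) * Real.exp (-(1 - p) * -h) + (1 - p) * Real.exp ((1 - (1 - p)) * -h)
        = (1 - p) * Real.exp (-p * h) + p * Real.exp ((1 - p) * h) := by
      ring_nf
    rw [heq] at this
    calc (1 - p) * Real.exp (-p * h) + p * Real.exp ((1 - p) * h)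
        ≤ Real.exp ((-h) ^ 2 / 8) := this
    _ = Real.exp (h ^ 2 / 8) := by ring_nf

/-- Chord bound from convexity of `exp`. -/
private lemma chord {a b v t : ℝ} (hav : a ≤ v) (hvb : v ≤ b) (hab : a < b) :
    Real.exp (t * v) ≤ ((b - v) * Real.exp (t * a) + (v - a) * Real.exp (t * b)) / (b - a) := by
  have hba : (0:ℝ) < b - a := by linarith
  have hw1 : 0 ≤ (b - v) / (b - a) := div_nonneg (by linarith) hba.le
  have hw2 : 0 ≤ (v - a) / (b - a) := div_nonneg (by linarith) hba.le
  have hsum : (b - v) / (b - a) + (v - a) / (b - a) = 1 := by field_simp; ring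
  have := convexOn_exp.2 (Set.mem_univ (t * a)) (Set.mem_univ (t * b)) hw1 hw2 hsum
  simp only [smul_eq_mul] at this
  have harg : (b - v) / (b - a) * (t * a) + (v - a) / (b - a) * (t * b) = t * v := by
    field_simp; ring
  rw [harg] at this
  calc Real.exp (t * v) ≤ (b - v) / (b - a) * Real.exp (t * a)
        + (v - a) / (b - a) * Real.exp (t * b) := this
  _ = ((b - v) * Real.exp (t * a) + (v - a) * Real.exp (t * b)) / (b - a) := by ring

/-- Evaluation of the chord at `0` is bounded by the Hoeffding exponential. -/
private lemma chord_zero_le {a b t : ℝ} (ha : a ≤ 0) (hb : 0 ≤ b) (hab : a < b) :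
    (b * Real.exp (t * a) - a * Real.exp (t * b)) / (b - a)
      ≤ Real.exp (t ^ 2 * (b - a) ^ 2 / 8) := by
  have hba : (0:ℝ) < b - a := by linarith
  set p : ℝ := -a / (b - a) with hpdef
  have hp0 : 0 ≤ p := by rw [hpdef]; exact div_nonneg (by linarith) hba.le
  have hp1 : p ≤ 1 := by rw [hpdef, div_le_one hba]; linarith
  have hcore := core hp0 hp1 (t * (b - a))
  have h1 : -p * (t * (b - a)) = t * a := by rw [hpdef]; field_simp
  have h2 : (1 - p) * (t * (b - a)) = t * b := by rw [hpdef]; field_simp; ring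
  have h3 : (1 - p) = b / (b - a) := by rw [hpdef]; field_simp; ring
  rw [h1, h2, h3] at hcore
  have h4 : (t * (b - a)) ^ 2 / 8 = t ^ 2 * (b - a) ^ 2 / 8 := by ring
  rw [h4] at hcore
  calc (b * Real.exp (t * a) - a * Real.exp (t * b)) / (b - a)
      = b / (b - a) * Real.exp (t * a) + p * Real.exp (t * b) := by
        rw [hpdef]; field_simp; ring
  _ ≤ Real.exp (t ^ 2 * (b - a) ^ 2 / 8) := hcore

/-- If `E[V|m] = 0` and `Z1 ≤ V` a.e. with `Z1` `m`-measurable, then `Z1 ≤ 0` a.e. -/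
private lemma le_zero_of_condexp_zero
    {Ω : Type*} {m0 : MeasurableSpace Ω} (μ : Measure Ω) [IsProbabilityMeasure μ]
    (m : MeasurableSpace Ω) (hm : m ≤ m0)
    (V Z1 : Ω → ℝ) (hV : Integrable V μ)
    (hle : ∀ᵐ ω ∂μ, Z1 ω ≤ V ω)
    (hcond : μ[V|m] =ᵐ[μ] 0)
    (hZ1 : Measurable[m] Z1) : ∀ᵐ ω ∂μ, Z1 ω ≤ 0 := by
  haveI : SigmaFinite (μ.trim hm) := by
    exact IsFiniteMeasure.toSigmaFinite _
  set S : Set Ω := {ω | 0 < Z1 ω} with hSdef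
  have hS : MeasurableSet[m] S := measurableSet_lt measurable_const hZ1
  have hS0 : MeasurableSet[m0] S := hm _ hS
  have hIS : ∫ ω in S, V ω ∂μ = 0 := by
    have h1 := setIntegral_condExp hm hV hS
    have h2 : ∫ ω in S, (μ[V|m]) ω ∂μ = 0 := by
      rw [integral_congr_ae (g := fun _ => (0:ℝ))
        (ae_restrict_of_ae (hcond.mono fun ω h => by simpa using h))]
      simp
    rw [← h1, h2]
  have hnn : 0 ≤ᵐ[μ.restrict S] V := by
    filter_upwards [ae_restrict_of_ae hle, ae_restrict_mem hS0] with ω h1 h2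
    exact le_of_lt (lt_of_lt_of_le h2 h1)
  have hzero : V =ᵐ[μ.restrict S] 0 :=
    (integral_eq_zero_iff_of_nonneg_ae hnn (hV.restrict)).1 hIS
  have hfalse : ∀ᵐ ω ∂(μ.restrict S), False := by
    filter_upwards [ae_restrict_of_ae hle, ae_restrict_mem hS0, hzero] with ω h1 h2 h3
    simp only [Pi.zero_apply] at h3
    exact absurd (h3 ▸ lt_of_lt_of_le h2 h1) (lt_irrefl 0)
  have : μ.restrict S = 0 := by
    rwa [Filter.eventually_false_iff_eq_bot, MeasureTheory.ae_eq_bot] at hfalse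
  have hμS : μ S = 0 := Measure.restrict_eq_zero.1 this
  rw [ae_iff]
  convert hμS using 2
  ext ω
  simp [hSdef, not_le]

/-- Conditional Hoeffding lemma: if `Z₁ ≤ V ≤ Z₂` a.s., `E[V|m] = 0` a.s., and `Z₁, Z₂` are
`m`-measurable, then `E[exp(λV)|m] ≤ exp(λ²(Z₂-Z₁)²/8)` a.s. -/
theorem conditional_hoeffding
    {Ω : Type*} {m0 : MeasurableSpace Ω} (μ : Measure Ω) [IsProbabilityMeasure μ]
    (m : MeasurableSpace Ω) (hm : m ≤ m0)
    (V Z1 Z2 : Ω → ℝ)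
    (hV : Integrable V μ)
    (hsandwich : ∀ᵐ ω ∂μ, Z1 ω ≤ V ω ∧ V ω ≤ Z2 ω)
    (hcond : μ[V|m] =ᵐ[μ] 0)
    (hZ1 : Measurable[m] Z1) (hZ2 : Measurable[m] Z2) :
    ∀ lam : ℝ,
      μ[fun ω => Real.exp (lam * V ω)|m]
        ≤ᵐ[μ] fun ω => Real.exp (lam ^ 2 * (Z2 ω - Z1 ω) ^ 2 / 8) := by
  intro lam
  haveI : SigmaFinite (μ.trim hm) := IsFiniteMeasure.toSigmaFinite _
  by_cases hint : Integrable (fun ω => Real.exp (lam * V ω)) μ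
  swap
  · rw [condExp_of_not_integrable hint]
    exact Filter.Eventually.of_forall fun ω => le_of_lt (Real.exp_pos _)
  -- `Z1 ≤ 0 ≤ Z2` a.e.
  have ha : ∀ᵐ ω ∂μ, Z1 ω ≤ 0 :=
    le_zero_of_condexp_zero μ m hm V Z1 hV (hsandwich.mono fun ω h => h.1) hcond hZ1
  have hb : ∀ᵐ ω ∂μ, 0 ≤ Z2 ω := by
    have hcond' : μ[-V|m] =ᵐ[μ] 0 := by
      filter_upwards [condExp_neg (m := m) V (μ := μ), hcond] with ω h1 h2
      simp [h1, h2]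
    have := le_zero_of_condexp_zero μ m hm (-V) (-Z2) hV.neg
      (hsandwich.mono fun ω h => by simpa using h.2) hcond' hZ2.neg
    filter_upwards [this] with ω h
    simpa using h
  -- affine majorant
  set A : Ω → ℝ := fun ω => if Z1 ω < Z2 ω then
      (Z2 ω * Real.exp (lam * Z1 ω) - Z1 ω * Real.exp (lam * Z2 ω)) / (Z2 ω - Z1 ω)
    else 1 with hAdef
  set B : Ω → ℝ := fun ω => if Z1 ω < Z2 ω then
      (Real.exp (lam * Z2 ω) - Real.exp (lam * Z1 ω)) / (Z2 ω - Z1 ω)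
    else 0 with hBdef
  have hEa : Measurable[m] fun ω => Real.exp (lam * Z1 ω) :=
    Real.measurable_exp.comp (hZ1.const_mul lam)
  have hEb : Measurable[m] fun ω => Real.exp (lam * Z2 ω) :=
    Real.measurable_exp.comp (hZ2.const_mul lam)
  have hltS : MeasurableSet[m] {ω | Z1 ω < Z2 ω} := measurableSet_lt hZ1 hZ2
  have hAm : Measurable[m] A :=
    Measurable.ite hltS (((hZ2.mul hEa).sub (hZ1.mul hEb)).div (hZ2.sub hZ1)) measurable_const
  have hBm : Measurable[m] B :=
    Measurable.ite hltS ((hEb.sub hEa).div (hZ2.sub hZ1)) measurable_const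
  -- pointwise bounds
  have hbound : ∀ᵐ ω ∂μ, Real.exp (lam * V ω) ≤ A ω + B ω * V ω := by
    filter_upwards [hsandwich, ha, hb] with ω h hA0 hB0
    obtain ⟨h1, h2⟩ := h
    by_cases hlt : Z1 ω < Z2 ω
    · simp only [hAdef, hBdef, if_pos hlt]
      have hc := chord h1 h2 hlt (t := lam)
      have hba : Z2 ω - Z1 ω ≠ 0 := by intro h; linarith [hlt]
      calc Real.exp (lam * V ω)
          ≤ ((Z2 ω - V ω) * Real.exp (lam * Z1 ω) + (V ω - Z1 ω) * Real.exp (lam * Z2 ω))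
            / (Z2 ω - Z1 ω) := hc
      _ = (Z2 ω * Real.exp (lam * Z1 ω) - Z1 ω * Real.exp (lam * Z2 ω)) / (Z2 ω - Z1 ω)
            + (Real.exp (lam * Z2 ω) - Real.exp (lam * Z1 ω)) / (Z2 ω - Z1 ω) * V ω := by
          field_simp
          ring
    · simp only [hAdef, hBdef, if_neg hlt]
      push_neg at hlt
      have hV0 : V ω = 0 := by linarith
      rw [hV0]
      simp
  have hAle : ∀ᵐ ω ∂μ, A ω ≤ Real.exp (lam ^ 2 * (Z2 ω - Z1 ω) ^ 2 / 8) := by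
    filter_upwards [ha, hb] with ω hA0 hB0
    by_cases hlt : Z1 ω < Z2 ω
    · simp only [hAdef, if_pos hlt]
      exact chord_zero_le hA0 hB0 hlt
    · simp only [hAdef, if_neg hlt]
      exact Real.one_le_exp (by positivity)
  -- truncation sets
  set Bn : ℕ → Set Ω := fun n => {ω | |A ω| ≤ n} ∩ {ω | |B ω| ≤ n} with hBndef
  have hBnm : ∀ n, MeasurableSet[m] (Bn n) := fun n =>
    (measurableSet_le hAm.abs measurable_const).inter
      (measurableSet_le hBm.abs measurable_const)
  set φ : ℕ → Ω → ℝ := fun n => (Bn n).indicator (fun _ => (1:ℝ)) with hφdef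
  have hφm : ∀ n, StronglyMeasurable[m] (φ n) := fun n =>
    (stronglyMeasurable_const (β := ℝ)).indicator (hBnm n)
  have hφ01 : ∀ n ω, φ n ω = 0 ∨ φ n ω = 1 := by
    intro n ω
    by_cases hω : ω ∈ Bn n <;> simp [hφdef, hω]
  have hφbd : ∀ n ω, ‖φ n ω‖ ≤ 1 := by
    intro n ω
    rcases hφ01 n ω with h | h <;> simp [h]
  have key : ∀ n : ℕ, ∀ᵐ ω ∂μ, ω ∈ Bn n →
      (μ[fun ω => Real.exp (lam * V ω)|m]) ω ≤ A ω := by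
    intro n
    have hφms : AEStronglyMeasurable[m0] (φ n) μ := ((hφm n).mono hm).aestronglyMeasurable
    -- integrability
    have i1 : Integrable (fun ω => φ n ω * Real.exp (lam * V ω)) μ :=
      hint.bdd_mul (c := 1) hφms (Filter.Eventually.of_forall (hφbd n))
    have iA : Integrable (fun ω => φ n ω * A ω) μ := by
      refine Integrable.mono' (integrable_const (n:ℝ)) ?_ ?_
      · exact (((hφm n).mul hAm.stronglyMeasurable).mono hm).aestronglyMeasurable
      · refine Filter.Eventually.of_forall fun ω => ?_
        by_cases hω : ω ∈ Bn n
        · have := hω.1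
          simp only [hφdef, Set.indicator_of_mem hω]
          simpa [abs_mul] using this
        · simp [hφdef, Set.indicator_of_notMem hω]
    have iBV : Integrable (fun ω => (φ n ω * B ω) * V ω) μ := by
      refine hV.bdd_mul (c := (n:ℝ)) ?_ (Filter.Eventually.of_forall fun ω => ?_)
      · exact (((hφm n).mul hBm.stronglyMeasurable).mono hm).aestronglyMeasurable
      · by_cases hω : ω ∈ Bn n
        · have := hω.2
          simp only [hφdef, Set.indicator_of_mem hω]
          simpa [abs_mul] using this
        · simp [hφdef, Set.indicator_of_notMem hω]
    have i2 : Integrable (fun ω => φ n ω * (A ω + B ω * V ω)) μ := by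
      have : (fun ω => φ n ω * (A ω + B ω * V ω))
          = fun ω => φ n ω * A ω + (φ n ω * B ω) * V ω := by
        funext ω; ring
      rw [this]
      exact iA.add iBV
    -- monotonicity
    have hmono : (fun ω => φ n ω * Real.exp (lam * V ω))
        ≤ᵐ[μ] fun ω => φ n ω * (A ω + B ω * V ω) := by
      filter_upwards [hbound] with ω hω
      have hφnn : 0 ≤ φ n ω := by rcases hφ01 n ω with h | h <;> simp [h]
      exact mul_le_mul_of_nonneg_left hω hφnn
    have key1 : μ[fun ω => φ n ω * Real.exp (lam * V ω)|m]
        =ᵐ[μ] fun ω => φ n ω * (μ[fun ω => Real.exp (lam * V ω)|m]) ω :=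
      condExp_mul_of_stronglyMeasurable_left (hφm n) i1 hint
    have key2 : μ[fun ω => φ n ω * (A ω + B ω * V ω)|m] =ᵐ[μ] fun ω => φ n ω * A ω := by
      have hsplit : (fun ω => φ n ω * (A ω + B ω * V ω))
          = (fun ω => φ n ω * A ω) + fun ω => (φ n ω * B ω) * V ω := by
        funext ω; simp [Pi.add_apply]; ring
      rw [hsplit]
      have e1 : μ[fun ω => φ n ω * A ω|m] = fun ω => φ n ω * A ω :=
        condExp_of_stronglyMeasurable hm ((hφm n).mul hAm.stronglyMeasurable) iA
      have e2 : μ[fun ω => (φ n ω * B ω) * V ω|m] =ᵐ[μ] 0 := by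
        have := condExp_mul_of_stronglyMeasurable_left ((hφm n).mul hBm.stronglyMeasurable) iBV hV
        refine this.trans ?_
        filter_upwards [hcond] with ω hω
        simp only [Pi.mul_apply, Pi.zero_apply]
        rw [show (μ[V|m]) ω = 0 from hω]
        ring
      calc μ[(fun ω => φ n ω * A ω) + fun ω => (φ n ω * B ω) * V ω|m]
          =ᵐ[μ] μ[fun ω => φ n ω * A ω|m] + μ[fun ω => (φ n ω * B ω) * V ω|m] :=
            condExp_add iA iBV m
      _ =ᵐ[μ] fun ω => φ n ω * A ω := by
          rw [e1]
          filter_upwards [e2] with ω hω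
          simp only [Pi.add_apply, hω, Pi.zero_apply, add_zero]
    have hmid := condExp_mono (m := m) i1 i2 hmono
    filter_upwards [key1, key2, hmid] with ω h1 h2 h3 hω
    have : φ n ω * (μ[fun ω => Real.exp (lam * V ω)|m]) ω ≤ φ n ω * A ω := by
      rw [← h1, ← h2]; exact h3
    simpa [hφdef, Set.indicator_of_mem hω] using this
  rw [← ae_all_iff] at key
  filter_upwards [key, hAle] with ω hkey hle
  have hmem : ω ∈ Bn ⌈max |A ω| |B ω|⌉₊ := by
    simp only [hBndef, Set.mem_inter_iff, Set.mem_setOf_eq]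
    exact ⟨(le_max_left _ _).trans (Nat.le_ceil _),
      (le_max_right _ _).trans (Nat.le_ceil _)⟩
  exact le_trans (hkey _ hmem) hle
end

section
/- Let A be a finite set, n ∈ ℕ, P a probability measure on Aⁿ, and g : Aⁿ → ℝ. Suppose (D^σ_{i,j}) is a random nonnegative upper-triangular matrix (depending measurably on σ) with D^σ_{ii} = 1 such that the martingale increments of g satisfy |Vᵢ(σ)| ≤ (D^σ δg)ᵢ for each i. Define the deterministic matrix 𝒟^{(2)}_{i,j} := (E[(D^σ_{i,j})²])^{1/2}. Then E[(g − E g)²] ≤ ‖𝒟^{(2)}‖²_{ℓ²} ‖δg‖²_{ℓ²}, where ‖𝒟^{(2)}‖_{ℓ²} is the operator norm of 𝒟^{(2)} on ℓ²(ℕ) and δg is the vector of oscillations of g. -/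
open MeasureTheory Real

/-- Oscillation of `g : Aⁿ → ℝ` at coordinate `i`. -/
noncomputable def oscFin {A : Type*} {n : ℕ} (g : (Fin n → A) → ℝ) (i : Fin n) : ℝ :=
  sSup {x | ∃ σ σ' : Fin n → A, (∀ j, j ≠ i → σ j = σ' j) ∧ x = |g σ - g σ'|}

/-- The filtration on `Aⁿ` generated by the first `i` coordinates. -/
def coordFiltration (A : Type*) [MeasurableSpace A] (n : ℕ) (i : ℕ) :
    MeasurableSpace (Fin n → A) :=
  ⨆ (j : Fin n) (_ : (j : ℕ) < i), MeasurableSpace.comap (fun σ => σ j) inferInstance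

lemma oscFin_nonneg {A : Type*} [Fintype A] [Nonempty A] {n : ℕ}
    (g : (Fin n → A) → ℝ) (i : Fin n) : 0 ≤ oscFin g i := by
  have hne : (0:ℝ) ∈ {x | ∃ σ σ' : Fin n → A, (∀ j, j ≠ i → σ j = σ' j) ∧ x = |g σ - g σ'|} :=
    ⟨Classical.arbitrary _, Classical.arbitrary _, fun j _ => rfl, by simp⟩
  have hbdd : BddAbove {x | ∃ σ σ' : Fin n → A, (∀ j, j ≠ i → σ j = σ' j) ∧ x = |g σ - g σ'|} := by
    refine BddAbove.mono ?_ (Set.finite_range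
      (fun p : (Fin n → A) × (Fin n → A) => |g p.1 - g p.2|)).bddAbove
    rintro x ⟨σ, σ', -, rfl⟩; exact ⟨(σ, σ'), rfl⟩
  exact le_csSup hbdd hne

lemma integral_CS {X : Type*} [Fintype X] [MeasurableSpace X] [MeasurableSingletonClass X]
    (μ : Measure X) [IsFiniteMeasure μ] (f h : X → ℝ) :
    ∫ x, f x * h x ∂μ ≤ (∫ x, f x ^ 2 ∂μ) ^ ((1:ℝ)/2) * (∫ x, h x ^ 2 ∂μ) ^ ((1:ℝ)/2) := by
  rw [← Real.sqrt_eq_rpow, ← Real.sqrt_eq_rpow,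
    integral_fintype .of_finite, integral_fintype .of_finite, integral_fintype .of_finite]
  simp only [smul_eq_mul, measureReal_def]
  calc ∑ x : X, (μ {x}).toReal * (f x * h x)
      = ∑ x : X, (Real.sqrt ((μ {x}).toReal) * f x) * (Real.sqrt ((μ {x}).toReal) * h x) := by
        refine Finset.sum_congr rfl fun x _ => ?_
        rw [show Real.sqrt ((μ {x}).toReal) * f x * (Real.sqrt ((μ {x}).toReal) * h x)
          = Real.sqrt ((μ {x}).toReal) * Real.sqrt ((μ {x}).toReal) * (f x * h x) by ring,
          Real.mul_self_sqrt ENNReal.toReal_nonneg]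
    _ ≤ Real.sqrt (∑ x : X, (Real.sqrt ((μ {x}).toReal) * f x)^2) *
        Real.sqrt (∑ x : X, (Real.sqrt ((μ {x}).toReal) * h x)^2) :=
        Real.sum_mul_le_sqrt_mul_sqrt _ _ _
    _ = Real.sqrt (∑ x : X, (μ {x}).toReal * f x ^ 2) *
        Real.sqrt (∑ x : X, (μ {x}).toReal * h x ^ 2) := by
        congr 2 <;> exact Finset.sum_congr rfl fun x _ => by
          rw [mul_pow, Real.sq_sqrt ENNReal.toReal_nonneg]

/-- Variance bound via the second-moment coupling matrix: if the martingale increments of `g`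
satisfy `|Vᵢ(σ)| ≤ (D^σ δg)ᵢ` for a random nonnegative upper-triangular matrix `D^σ` with unit
diagonal, and `𝒟⁽²⁾_{i,j} = (E[(D^σ_{i,j})²])^{1/2}` has `ℓ²`-operator norm at most `Dnorm`,
then `E[(g - E g)²] ≤ Dnorm² ‖δg‖²`. -/
theorem variance_bound_coupling
    {A : Type*} [Fintype A] [Nonempty A] [MeasurableSpace A] [MeasurableSingletonClass A]
    (n : ℕ) (μ : Measure (Fin n → A)) [IsProbabilityMeasure μ]
    (g : (Fin n → A) → ℝ) (hg : Measurable g)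
    (δ : ℕ → ℝ) (hδ : δ = fun j => if h : j < n then oscFin g ⟨j, h⟩ else 0)
    (V : ℕ → (Fin n → A) → ℝ)
    (hV : ∀ i, V i = μ[g|coordFiltration A n i] - μ[g|coordFiltration A n (i - 1)])
    (D : (Fin n → A) → ℕ → ℕ → ℝ)
    (hDnn : ∀ σ i j, 0 ≤ D σ i j)
    (hDdiag : ∀ σ i, D σ i i = 1)
    (hDtri : ∀ σ i j, j < i → D σ i j = 0)
    (hDmeas : ∀ i j, Measurable fun σ => D σ i j)
    (hVD : ∀ i ∈ Finset.Icc 1 n, ∀ᵐ σ ∂μ, |V i σ| ≤ ∑' j, D σ i j * δ j)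
    (calD2 : ℕ → ℕ → ℝ)
    (hcalD2 : calD2 = fun i j => (∫ σ, D σ i j ^ 2 ∂μ) ^ ((1 : ℝ) / 2))
    (Dnorm : ℝ) (hDnorm0 : 0 ≤ Dnorm)
    (hop : ∀ u : ℕ → ℝ, (∀ j, 0 ≤ u j) → Summable (fun j => u j ^ 2) →
      ∑' i, (∑' j, calD2 i j * u j) ^ 2 ≤ Dnorm ^ 2 * ∑' j, u j ^ 2) :
    ∫ σ, (g σ - ∫ x, g x ∂μ) ^ 2 ∂μ ≤ Dnorm ^ 2 * ∑' j, δ j ^ 2 := by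
  classical
  -- basic facts about δ
  have hδ0 : ∀ j, ¬ j < n → δ j = 0 := by intro j hj; rw [hδ]; simp [hj]
  have hδnn : ∀ j, 0 ≤ δ j := by
    intro j
    by_cases h : j < n
    · have : δ j = oscFin g ⟨j, h⟩ := by rw [hδ]; simp [h]
      rw [this]; exact oscFin_nonneg g _
    · rw [hδ0 j h]
  -- filtration facts
  have hle : ∀ k, coordFiltration A n k ≤ (inferInstance : MeasurableSpace (Fin n → A)) :=
    fun k => iSup_le fun j => iSup_le fun _ => (measurable_pi_apply j).comap_le
  have hmono : ∀ {k l : ℕ}, k ≤ l → coordFiltration A n k ≤ coordFiltration A n l := by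
    intro k l hkl
    refine iSup_le fun j => iSup_le fun hj => ?_
    exact le_iSup₂ (f := fun (j : Fin n) (_ : (j : ℕ) < l) =>
      MeasurableSpace.comap (fun σ : Fin n → A => σ j) inferInstance) j (lt_of_lt_of_le hj hkl)
  have hgint : Integrable g μ := .of_finite
  -- g is measurable w.r.t. the full filtration
  have hsing : ∀ σ : Fin n → A, MeasurableSet[coordFiltration A n n] {σ} := by
    intro σ
    have h1 : {σ} = ⋂ j, (fun τ : Fin n → A => τ j) ⁻¹' {σ j} := by
      ext τ; simp [funext_iff, eq_comm]
    rw [h1]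
    refine MeasurableSet.iInter fun j => ?_
    exact (le_iSup₂ (f := fun (j : Fin n) (_ : (j : ℕ) < n) =>
      MeasurableSpace.comap (fun σ : Fin n → A => σ j) inferInstance) j j.isLt) _
      ⟨{σ j}, measurableSet_singleton _, rfl⟩
  have hgsm : StronglyMeasurable[coordFiltration A n n] g := by
    have hmeas : Measurable[coordFiltration A n n] g := by
      intro s _
      rw [← Set.biUnion_of_singleton (g ⁻¹' s)]
      exact MeasurableSet.biUnion (Set.to_countable _) fun σ _ => hsing σ
    exact hmeas.stronglyMeasurable
  have hFn : μ[g|coordFiltration A n n] = g :=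
    condExp_of_stronglyMeasurable (hle n) hgsm hgint
  have hF0 : coordFiltration A n 0 = ⊥ :=
    le_antisymm (iSup_le fun j => iSup_le fun hj => absurd hj (by omega)) bot_le
  have hFbot : μ[g|coordFiltration A n 0] = fun _ => ∫ x, g x ∂μ := by
    rw [hF0]; exact condExp_bot g
  -- telescoping
  have htel : ∑ k ∈ Finset.range n, V (k + 1) = fun σ => g σ - ∫ x, g x ∂μ := by
    have h1 : ∀ k ∈ Finset.range n, V (k + 1)
        = μ[g|coordFiltration A n (k + 1)] - μ[g|coordFiltration A n k] := by
      intro k _; rw [hV]; simp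
    have h2 := Finset.sum_range_sub (fun k => μ[g|coordFiltration A n k]) n
    rw [Finset.sum_congr rfl h1, h2, hFn, hFbot]
    rfl
  -- orthogonality
  have horth : ∀ k l : ℕ, k < l → ∫ σ, V (k + 1) σ * V (l + 1) σ ∂μ = 0 := by
    intro k l hkl
    have hVk_sm : StronglyMeasurable[coordFiltration A n l] (V (k + 1)) := by
      rw [hV]
      simp only [Nat.add_sub_cancel]
      exact ((stronglyMeasurable_condExp).mono (hmono (by omega))).sub
        ((stronglyMeasurable_condExp).mono (hmono (by omega)))
    have hcond0 : μ[V (l + 1)|coordFiltration A n l] =ᵐ[μ] 0 := by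
      rw [hV]
      simp only [Nat.add_sub_cancel]
      have h1 := condExp_sub (μ := μ) (m := coordFiltration A n l)
        (f := μ[g|coordFiltration A n (l + 1)]) (g := μ[g|coordFiltration A n l])
        integrable_condExp integrable_condExp
      have h2 := condExp_condExp_of_le (μ := μ) (f := g) (hmono (Nat.le_succ l)) (hle (l + 1))
      have h3 : μ[μ[g|coordFiltration A n l]|coordFiltration A n l]
          = μ[g|coordFiltration A n l] :=
        condExp_of_stronglyMeasurable (hle l) stronglyMeasurable_condExp integrable_condExp
      filter_upwards [h1, h2] with σ hσ1 hσ2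
      have h4 := congrFun h3 σ
      simp only [Pi.sub_apply, Pi.zero_apply] at *
      rw [hσ1, hσ2, h4, sub_self]
    calc ∫ σ, V (k + 1) σ * V (l + 1) σ ∂μ
        = ∫ σ, (μ[fun σ => V (k + 1) σ * V (l + 1) σ|coordFiltration A n l]) σ ∂μ :=
          (integral_condExp (hle l)).symm
      _ = ∫ σ, V (k + 1) σ * (μ[V (l + 1)|coordFiltration A n l]) σ ∂μ := by
          refine integral_congr_ae ?_
          have := condExp_mul_of_stronglyMeasurable_left (μ := μ) hVk_sm
            (Integrable.of_finite (f := V (k + 1) * V (l + 1))) (Integrable.of_finite)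
          filter_upwards [this] with σ hσ
          exact hσ
      _ = 0 := by
          have : ∀ᵐ σ ∂μ, V (k + 1) σ * (μ[V (l + 1)|coordFiltration A n l]) σ = 0 := by
            filter_upwards [hcond0] with σ hσ
            rw [hσ]; simp
          rw [integral_congr_ae this, integral_zero]
  -- expansion of the variance
  have hVsum : ∫ σ, (g σ - ∫ x, g x ∂μ) ^ 2 ∂μ
      = ∑ k ∈ Finset.range n, ∫ σ, (V (k + 1) σ) ^ 2 ∂μ := by
    have h1 : ∀ σ, (g σ - ∫ x, g x ∂μ) ^ 2
        = ∑ k ∈ Finset.range n, ∑ l ∈ Finset.range n, V (k + 1) σ * V (l + 1) σ := by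
      intro σ
      have h2 := congrFun htel σ
      rw [Finset.sum_apply] at h2
      rw [← h2, sq, Finset.sum_mul_sum]
    calc ∫ σ, (g σ - ∫ x, g x ∂μ) ^ 2 ∂μ
        = ∫ σ, ∑ k ∈ Finset.range n, ∑ l ∈ Finset.range n, V (k + 1) σ * V (l + 1) σ ∂μ := by
          exact integral_congr_ae (Filter.Eventually.of_forall h1)
      _ = ∑ k ∈ Finset.range n, ∑ l ∈ Finset.range n, ∫ σ, V (k + 1) σ * V (l + 1) σ ∂μ := by
          rw [integral_finset_sum _ fun k _ => .of_finite]
          exact Finset.sum_congr rfl fun k _ => integral_finset_sum _ fun l _ => .of_finite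
      _ = ∑ k ∈ Finset.range n, ∫ σ, (V (k + 1) σ) ^ 2 ∂μ := by
          refine Finset.sum_congr rfl fun k hk => ?_
          rw [Finset.sum_eq_single_of_mem k hk]
          · congr 1; funext σ; rw [sq]
          · intro l _ hlk
            rcases hlk.lt_or_gt with h | h
            · calc ∫ σ, V (k + 1) σ * V (l + 1) σ ∂μ
                  = ∫ σ, V (l + 1) σ * V (k + 1) σ ∂μ := by congr 1; funext σ; ring
                _ = 0 := horth l k h
            · exact horth k l h
  -- per-increment bound
  have htsumδ : ∀ (f : ℕ → ℝ), ∑' j, f j * δ j = ∑ j ∈ Finset.range n, f j * δ j :=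
    fun f => tsum_eq_sum fun j hj => by
      rw [hδ0 j (by simpa using hj), mul_zero]
  have hCS : ∀ i j j', ∫ σ, D σ i j * D σ i j' ∂μ ≤ calD2 i j * calD2 i j' := by
    intro i j j'
    rw [hcalD2]
    exact integral_CS μ _ _
  have hkey : ∀ k ∈ Finset.range n, ∫ σ, (V (k + 1) σ) ^ 2 ∂μ
      ≤ (∑ j ∈ Finset.range n, calD2 (k + 1) j * δ j) ^ 2 := by
    intro k hk
    have hk' : k < n := Finset.mem_range.mp hk
    have hVb := hVD (k + 1) (Finset.mem_Icc.mpr ⟨by omega, by omega⟩)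
    have step1 : ∫ σ, (V (k + 1) σ) ^ 2 ∂μ
        ≤ ∫ σ, (∑ j ∈ Finset.range n, D σ (k + 1) j * δ j) ^ 2 ∂μ := by
      refine integral_mono_ae .of_finite .of_finite ?_
      filter_upwards [hVb] with σ hσ
      rw [htsumδ] at hσ
      exact sq_le_sq' (abs_le.mp hσ).1 (abs_le.mp hσ).2
    have step2 : ∫ σ, (∑ j ∈ Finset.range n, D σ (k + 1) j * δ j) ^ 2 ∂μ
        ≤ (∑ j ∈ Finset.range n, calD2 (k + 1) j * δ j) ^ 2 := by
      have hexp : ∀ σ : Fin n → A, (∑ j ∈ Finset.range n, D σ (k + 1) j * δ j) ^ 2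
          = ∑ j ∈ Finset.range n, ∑ j' ∈ Finset.range n,
              (δ j * δ j') * (D σ (k + 1) j * D σ (k + 1) j') := by
        intro σ
        rw [sq, Finset.sum_mul_sum]
        exact Finset.sum_congr rfl fun j _ => Finset.sum_congr rfl fun j' _ => by ring
      calc ∫ σ, (∑ j ∈ Finset.range n, D σ (k + 1) j * δ j) ^ 2 ∂μ
          = ∑ j ∈ Finset.range n, ∑ j' ∈ Finset.range n,
              (δ j * δ j') * ∫ σ, D σ (k + 1) j * D σ (k + 1) j' ∂μ := by
            rw [integral_congr_ae (Filter.Eventually.of_forall hexp),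
              integral_finset_sum _ fun j _ => .of_finite]
            refine Finset.sum_congr rfl fun j _ => ?_
            rw [integral_finset_sum _ fun j' _ => .of_finite]
            exact Finset.sum_congr rfl fun j' _ => integral_const_mul _ _
        _ ≤ ∑ j ∈ Finset.range n, ∑ j' ∈ Finset.range n,
              (δ j * δ j') * (calD2 (k + 1) j * calD2 (k + 1) j') := by
            refine Finset.sum_le_sum fun j _ => Finset.sum_le_sum fun j' _ => ?_
            exact mul_le_mul_of_nonneg_left (hCS _ _ _) (mul_nonneg (hδnn j) (hδnn j'))
        _ = (∑ j ∈ Finset.range n, calD2 (k + 1) j * δ j) ^ 2 := by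
            rw [sq, Finset.sum_mul_sum]
            exact Finset.sum_congr rfl fun j _ => Finset.sum_congr rfl fun j' _ => by ring
    exact step1.trans step2
  -- comparison with the tsum and conclusion
  have hcal_zero : ∀ i j, j < i → calD2 i j = 0 := by
    intro i j h
    have h1 : (fun σ : Fin n → A => D σ i j ^ 2) = fun _ => (0:ℝ) :=
      funext fun σ => by rw [hDtri σ i j h]; ring
    rw [hcalD2]
    simp only [h1, integral_zero]
    rw [Real.zero_rpow (by norm_num)]
  have hinner : ∀ i, ∑' j, calD2 i j * δ j = ∑ j ∈ Finset.range n, calD2 i j * δ j :=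
    fun i => htsumδ _
  have hfzero : ∀ i, i ∉ Finset.range (n + 1) → (∑' j, calD2 i j * δ j) ^ 2 = 0 := by
    intro i hi
    have hi' : n < i := by simpa using hi
    rw [hinner]
    have : ∀ j ∈ Finset.range n, calD2 i j * δ j = 0 := fun j hj => by
      rw [hcal_zero i j (lt_trans (Finset.mem_range.mp hj) hi'), zero_mul]
    rw [Finset.sum_eq_zero this]
    ring
  have hfsummable : Summable (fun i => (∑' j, calD2 i j * δ j) ^ 2) :=
    summable_of_ne_finset_zero hfzero
  have hsum_le : ∑ k ∈ Finset.range n, (∑ j ∈ Finset.range n, calD2 (k + 1) j * δ j) ^ 2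
      ≤ ∑' i, (∑' j, calD2 i j * δ j) ^ 2 := by
    have h1 : ∑ k ∈ Finset.range n, (∑ j ∈ Finset.range n, calD2 (k + 1) j * δ j) ^ 2
        = ∑ i ∈ (Finset.range n).image (· + 1), (∑' j, calD2 i j * δ j) ^ 2 := by
      rw [Finset.sum_image (by intro a _ b _ h; simp only at h; omega)]
      exact Finset.sum_congr rfl fun k _ => by rw [hinner]
    rw [h1]
    exact Summable.sum_le_tsum _ (fun i _ => sq_nonneg _) hfsummable
  have hδsq : Summable fun j => δ j ^ 2 :=
    summable_of_ne_finset_zero (s := Finset.range n)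
      fun j hj => by rw [hδ0 j (by simpa using hj)]; ring
  calc ∫ σ, (g σ - ∫ x, g x ∂μ) ^ 2 ∂μ
      = ∑ k ∈ Finset.range n, ∫ σ, (V (k + 1) σ) ^ 2 ∂μ := hVsum
    _ ≤ ∑ k ∈ Finset.range n, (∑ j ∈ Finset.range n, calD2 (k + 1) j * δ j) ^ 2 :=
        Finset.sum_le_sum hkey
    _ ≤ ∑' i, (∑' j, calD2 i j * δ j) ^ 2 := hsum_le
    _ ≤ Dnorm ^ 2 * ∑' j, δ j ^ 2 := hop δ hδnn hδsq
end

section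
/- Let ℓ₀ be a nonnegative random variable and p ∈ ℕ, ε > 0, ε' := ε/(2p−1). Then Σ_{j=1}^∞ P(ℓ₀ ≥ j)^{1/(2p)} ≤ ζ(1+ε')^{(2p−1)/(2p)} · (E[ℓ₀^{2p+ε}])^{1/(2p)}, where ζ is the Riemann zeta function. -/
open MeasureTheory Real

/-- Tail-sum moment bound: for a nonnegative random variable `ℓ₀`, `p ≥ 1` and `ε > 0`,
with `ε' = ε/(2p-1)`,
`∑_{j≥1} P(ℓ₀ ≥ j)^{1/(2p)} ≤ ζ(1+ε')^{(2p-1)/(2p)} (E[ℓ₀^{2p+ε}])^{1/(2p)}`,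
where `ζ(s) = ∑_{n≥1} n^{-s}`. -/
theorem tail_sum_moment_bound
    {Ω : Type*} {m0 : MeasurableSpace Ω} (μ : Measure Ω) [IsProbabilityMeasure μ]
    (ℓ : Ω → ℝ) (hℓnn : ∀ σ, 0 ≤ ℓ σ) (hℓmeas : Measurable ℓ)
    (p : ℕ) (hp : 1 ≤ p) (ε : ℝ) (hε : 0 < ε)
    (ε' : ℝ) (hε' : ε' = ε / (2 * p - 1))
    (hmom : Integrable (fun σ => ℓ σ ^ ((2 * p : ℝ) + ε)) μ) :
    ∑' j : ℕ, (μ {σ | ((j : ℝ) + 1) ≤ ℓ σ}).toReal ^ ((1 : ℝ) / (2 * p))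
      ≤ (∑' m : ℕ, ((m : ℝ) + 1) ^ (-(1 + ε'))) ^ ((2 * p - 1 : ℝ) / (2 * p))
        * (∫ σ, ℓ σ ^ ((2 * p : ℝ) + ε) ∂μ) ^ ((1 : ℝ) / (2 * p)) := by
  set c : ℝ := 2 * p with hc
  have hc2 : (2 : ℝ) ≤ c := by
    have : (1 : ℝ) ≤ (p : ℝ) := by exact_mod_cast hp
    simp [hc]; nlinarith
  have hc1 : (1 : ℝ) < c := by linarith
  have hc0 : (0 : ℝ) < c := by linarith
  have hcm1 : (0 : ℝ) < c - 1 := by linarith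
  have hε'pos : 0 < ε' := by
    rw [hε']; exact div_pos hε (by rw [hc] at hcm1; linarith)
  have hkey : ε' * (c - 1) = ε := by
    rw [hε']; field_simp
  set q : ℝ := c / (c - 1) with hq
  have hq0 : 0 < q := div_pos hc0 hcm1
  have hpq : q.HolderConjugate c := (Real.HolderConjugate.conjExponent hc1).symm
  -- notation
  set P : ℕ → ENNReal := fun j => μ {σ | ((j : ℝ) + 1) ≤ ℓ σ} with hP
  have hPne : ∀ j, P j ≠ ⊤ := fun j => measure_ne_top μ _
  set F : ℕ → ENNReal := fun j => ((j : ENNReal) + 1) ^ (-(1 + ε') / q) with hF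
  set G : ℕ → ENNReal := fun j => ((j : ENNReal) + 1) ^ ((1 + ε') / q) * (P j) ^ (1 / c) with hG
  have hbase0 : ∀ j : ℕ, ((j : ENNReal) + 1) ≠ 0 := fun j => by simp
  have hbaset : ∀ j : ℕ, ((j : ENNReal) + 1) ≠ ⊤ := fun j => by
    simp [ENNReal.add_ne_top]
  have hcast : ∀ j : ℕ, ((j : ENNReal) + 1) = ENNReal.ofReal ((j : ℝ) + 1) := by
    intro j
    rw [ENNReal.ofReal_add (Nat.cast_nonneg j) zero_le_one, ENNReal.ofReal_natCast,
      ENNReal.ofReal_one]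
  have hms : ∀ j : ℕ, MeasurableSet {σ' : Ω | ((j : ℝ) + 1) ≤ ℓ σ'} :=
    fun j => hℓmeas measurableSet_Ici
  have hFG : ∀ j, F j * G j = (P j) ^ (1 / c) := by
    intro j
    rw [hF, hG, ← mul_assoc, ← ENNReal.rpow_add _ _ (hbase0 j) (hbaset j)]
    rw [neg_div, neg_add_cancel, ENNReal.rpow_zero, one_mul]
  -- Hölder
  have holder :
      ∑' j, F j * G j ≤ (∑' j, (F j) ^ q) ^ (1 / q) * (∑' j, (G j) ^ c) ^ (1 / c) := by
    have := ENNReal.lintegral_mul_le_Lp_mul_Lq (Measure.count : Measure ℕ) hpq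
      (f := F) (g := G) (measurable_of_countable _).aemeasurable
      (measurable_of_countable _).aemeasurable
    simpa [MeasureTheory.lintegral_count] using this
  -- compute F^q
  have hFq : ∀ j, (F j) ^ q = ((j : ENNReal) + 1) ^ (-(1 + ε')) := by
    intro j
    rw [hF, ← ENNReal.rpow_mul, div_mul_cancel₀]
    exact ne_of_gt hq0
  -- compute G^c
  have hGc : ∀ j, (G j) ^ c = ((j : ENNReal) + 1) ^ (c - 1 + ε) * P j := by
    intro j
    rw [hG, ENNReal.mul_rpow_of_nonneg _ _ (le_of_lt hc0), ← ENNReal.rpow_mul,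
      ← ENNReal.rpow_mul, one_div, inv_mul_cancel₀ (ne_of_gt hc0), ENNReal.rpow_one]
    congr 2
    rw [hq]
    field_simp
    ring_nf
    nlinarith [hkey]
  -- the zeta-type sum
  set Z : ENNReal := ∑' j : ℕ, ((j : ENNReal) + 1) ^ (-(1 + ε')) with hZdef
  have hsummable : Summable (fun m : ℕ => ((m : ℝ) + 1) ^ (-(1 + ε'))) := by
    have h1 : Summable (fun n : ℕ => (n : ℝ) ^ (-(1 + ε'))) :=
      Real.summable_nat_rpow.2 (by linarith)
    have := (summable_nat_add_iff 1).2 h1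
    refine this.congr fun m => ?_
    push_cast
    ring_nf
  have htermZ : ∀ m : ℕ, ((m : ENNReal) + 1) ^ (-(1 + ε'))
      = ENNReal.ofReal (((m : ℝ) + 1) ^ (-(1 + ε'))) := by
    intro m
    rw [hcast m, ENNReal.ofReal_rpow_of_pos (by positivity)]
  have hZ : Z = ENNReal.ofReal (∑' m : ℕ, ((m : ℝ) + 1) ^ (-(1 + ε'))) := by
    rw [hZdef, ENNReal.ofReal_tsum_of_nonneg (fun m => by positivity) hsummable]
    exact tsum_congr htermZ
  have hZne : Z ≠ ⊤ := by rw [hZ]; exact ENNReal.ofReal_ne_top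
  -- the moment integral
  set I : ENNReal := ∫⁻ σ, ENNReal.ofReal (ℓ σ ^ (c + ε)) ∂μ with hIdef
  have hInn : 0 ≤ᵐ[μ] fun σ => ℓ σ ^ (c + ε) :=
    Filter.Eventually.of_forall fun σ => Real.rpow_nonneg (hℓnn σ) _
  have hI : ENNReal.ofReal (∫ σ, ℓ σ ^ (c + ε) ∂μ) = I :=
    MeasureTheory.ofReal_integral_eq_lintegral_ofReal hmom hInn
  have hIne : I ≠ ⊤ := by rw [← hI]; exact ENNReal.ofReal_ne_top
  -- tail sum bounded by moment
  have hT : ∑' j, (G j) ^ c ≤ I := by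
    have hrw : ∀ j, (G j) ^ c
        = ∫⁻ σ, Set.indicator {σ' | ((j : ℝ) + 1) ≤ ℓ σ'}
            (fun _ => ((j : ENNReal) + 1) ^ (c - 1 + ε)) σ ∂μ := by
      intro j
      rw [hGc j]
      exact (MeasureTheory.lintegral_indicator_const (hms j) _).symm
    calc ∑' j, (G j) ^ c
        = ∫⁻ σ, ∑' (j : ℕ), Set.indicator {σ' | ((j : ℝ) + 1) ≤ ℓ σ'}
            (fun _ => ((j : ENNReal) + 1) ^ (c - 1 + ε)) σ ∂μ := by
          rw [MeasureTheory.lintegral_tsum fun j =>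
            (measurable_const.indicator (hms j)).aemeasurable]
          exact tsum_congr hrw
      _ ≤ I := by
          apply MeasureTheory.lintegral_mono
          intro σ
          set L := ℓ σ with hL
          have hLnn : 0 ≤ L := hℓnn σ
          have hvan : ∀ j ∉ Finset.range ⌊L⌋₊,
              Set.indicator {σ' | ((j : ℝ) + 1) ≤ ℓ σ'}
                (fun _ => ((j : ENNReal) + 1) ^ (c - 1 + ε)) σ = 0 := by
            intro j hj
            simp only [Finset.mem_range, not_lt] at hj
            apply Set.indicator_of_notMem
            simp only [Set.mem_setOf_eq, not_le, ← hL]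
            calc L < ⌊L⌋₊ + 1 := Nat.lt_floor_add_one L
              _ ≤ (j : ℝ) + 1 := by exact_mod_cast Nat.add_le_add_right hj 1
          dsimp only
          rw [tsum_eq_sum hvan]
          have hterm : ∀ j ∈ Finset.range ⌊L⌋₊,
              Set.indicator {σ' | ((j : ℝ) + 1) ≤ ℓ σ'}
                (fun _ => ((j : ENNReal) + 1) ^ (c - 1 + ε)) σ
              ≤ ENNReal.ofReal L ^ (c - 1 + ε) := by
            intro j _
            by_cases hmem : σ ∈ {σ' | ((j : ℝ) + 1) ≤ ℓ σ'}
            · rw [Set.indicator_of_mem hmem]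
              apply ENNReal.rpow_le_rpow _ (by linarith)
              rw [hcast j]
              exact ENNReal.ofReal_le_ofReal hmem
            · rw [Set.indicator_of_notMem hmem]; exact zero_le
          calc (∑ j ∈ Finset.range ⌊L⌋₊, Set.indicator {σ' | ((j : ℝ) + 1) ≤ ℓ σ'}
                (fun _ => ((j : ENNReal) + 1) ^ (c - 1 + ε)) σ)
              ≤ (⌊L⌋₊ : ENNReal) * ENNReal.ofReal L ^ (c - 1 + ε) := by
                have := Finset.sum_le_card_nsmul (Finset.range ⌊L⌋₊) _ _ hterm
                simpa [nsmul_eq_mul] using this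
            _ ≤ ENNReal.ofReal L * ENNReal.ofReal L ^ (c - 1 + ε) := by
                gcongr
                rw [← ENNReal.ofReal_natCast]
                exact ENNReal.ofReal_le_ofReal (Nat.floor_le hLnn)
            _ = ENNReal.ofReal L ^ (c + ε) := by
                rw [show c + ε = 1 + (c - 1 + ε) by ring,
                  ENNReal.rpow_add_of_nonneg _ _ zero_le_one (by linarith),
                  ENNReal.rpow_one]
            _ = ENNReal.ofReal (L ^ (c + ε)) := by
                rw [ENNReal.ofReal_rpow_of_nonneg hLnn (by linarith)]
  -- main ENNReal inequality
  have hmain : ∑' j, (P j) ^ (1 / c) ≤ Z ^ ((c - 1) / c) * I ^ (1 / c) := by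
    have h1 : ∑' j, (P j) ^ (1 / c) = ∑' j, F j * G j := tsum_congr fun j => (hFG j).symm
    have h2 : (∑' j, (F j) ^ q) = Z := by rw [hZdef]; exact tsum_congr hFq
    have h3 : (1 : ℝ) / q = (c - 1) / c := by rw [hq, one_div_div]
    rw [h1]
    refine holder.trans ?_
    rw [h2, h3]
    gcongr
  -- convert to reals
  have hLHS : ∑' j : ℕ, (P j).toReal ^ ((1 : ℝ) / c)
      = (∑' j, (P j) ^ (1 / c)).toReal := by
    rw [ENNReal.tsum_toReal_eq fun j =>
      ENNReal.rpow_ne_top_of_nonneg (by positivity) (hPne j)]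
    exact tsum_congr fun j => ENNReal.toReal_rpow _ _
  have hZtr : (∑' m : ℕ, ((m : ℝ) + 1) ^ (-(1 + ε'))) = Z.toReal := by
    rw [hZ, ENNReal.toReal_ofReal (tsum_nonneg fun m => by positivity)]
  have hItr : (∫ σ, ℓ σ ^ (c + ε) ∂μ) = I.toReal := by
    rw [← hI, ENNReal.toReal_ofReal (integral_nonneg fun σ => Real.rpow_nonneg (hℓnn σ) _)]
  rw [hLHS, hZtr, hItr, ENNReal.toReal_rpow, ENNReal.toReal_rpow, ← ENNReal.toReal_mul]
  exact ENNReal.toReal_mono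
    (ENNReal.mul_ne_top (ENNReal.rpow_ne_top_of_nonneg (by positivity) hZne)
      (ENNReal.rpow_ne_top_of_nonneg (by positivity) hIne)) hmain
end
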